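/- For every μ ∈ ℝ and every subset Ω ⊆ Λ, decoupling the Laplacian across the boundary of Ω raises the sum of negative eigenvalues: Tr{[-Δ̃ - μ·Id]_-} ≥ Tr{[-Δ - μ·Id]_-}, where Δ̃ := P_Ω Δ P_Ω + P_Ω^⊥ Δ P_Ω^⊥. -/

import Mathlib

open Matrix
open scoped BigOperators Classical ComplexOrder

noncomputable section

/-- The discrete torus `Λ = (ℤ/Lℤ)^d`. -/
abbrev Lam (d L : ℕ) : Type := Fin d → ZMod L

/-- `x` and `y` are nearest neighbors on the torus (ℓ¹-distance 1). -/
def isNN {d L : ℕ} (x y : Lam d L) : Prop :=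
  ∃ ν : Fin d, (x ν = y ν + 1 ∨ x ν + 1 = y ν) ∧ ∀ μ : Fin d, μ ≠ ν → x μ = y μ

/-- The discrete Laplacian `Δ = T - 2d·Id` on the torus. -/
def lap (d L : ℕ) : Matrix (Lam d L) (Lam d L) ℂ :=
  (Matrix.of fun x y => if isNN x y then (1 : ℂ) else 0) - (2 * (d : ℂ)) • 1

/-- A one-particle density matrix: hermitian with `0 ≤ γ ≤ 1` as quadratic forms. -/
def IsDM {d L : ℕ} [NeZero L] (γ : Matrix (Lam d L) (Lam d L) ℂ) : Prop :=
  γ.PosSemidef ∧ (1 - γ).PosSemidef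

/-- `Tr{[X]_-}`: the sum of the negative eigenvalues of a hermitian matrix `X`
(junk value `0` if `X` is not hermitian). -/
def negTrace {n : Type} [Fintype n] [DecidableEq n] (X : Matrix n n ℂ) : ℝ :=
  if hX : X.IsHermitian then ∑ i, min (hX.eigenvalues i) 0 else 0

/-- The HFz energy functional. -/
def hfzE {d L : ℕ} [NeZero L] (μ U : ℝ) (γu γd : Matrix (Lam d L) (Lam d L) ℂ) : ℝ :=
  (((-(lap d L) - (μ : ℂ) • 1) * (γu + γd)).trace).re
    + U * ∑ x, (γu x x).re * (γd x x).re

/-- The set of HFz energy values over pairs of one-particle density matrices. -/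
def hfzEnergies (d L : ℕ) [NeZero L] (μ U : ℝ) : Set ℝ :=
  { E | ∃ γu γd : Matrix (Lam d L) (Lam d L) ℂ, IsDM γu ∧ IsDM γd ∧ hfzE μ U γu γd = E }

/-- The diagonal orthogonal projection `P_A` onto the coordinates in `A`. -/
def proj {d L : ℕ} (A : Set (Lam d L)) : Matrix (Lam d L) (Lam d L) ℂ :=
  Matrix.diagonal fun x => if x ∈ A then 1 else 0

/-- The boundary `∂Ω := {x ∈ Ω : x has a nearest neighbor outside Ω}`. -/
def bdry {d L : ℕ} (Ω : Set (Lam d L)) : Set (Lam d L) :=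
  {x | x ∈ Ω ∧ ∃ y, y ∉ Ω ∧ isNN x y}

section DecouplingHelpers

variable {m : Type} [Fintype m] [DecidableEq m]

lemma psd_diag_re_nonneg {g : Matrix m m ℂ} (hg : g.PosSemidef) (i : m) :
    0 ≤ (g i i).re := by
  exact (Complex.le_def.mp hg.diag_nonneg).1

lemma negTrace_le_re_trace_mul {X γ : Matrix m m ℂ} (hX : X.IsHermitian)
    (hγ : γ.PosSemidef) (hγ1 : ((1 : Matrix m m ℂ) - γ).PosSemidef) :
    negTrace X ≤ ((X * γ).trace).re := by
  classical
  set U : Matrix m m ℂ := (Matrix.IsHermitian.eigenvectorUnitary hX : Matrix m m ℂ) with hUdef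
  have hUU : U * star U = 1 :=
    (Matrix.mem_unitaryGroup_iff).mp (Matrix.IsHermitian.eigenvectorUnitary hX).2
  have hUU' : star U * U = 1 :=
    (Matrix.mem_unitaryGroup_iff').mp (Matrix.IsHermitian.eigenvectorUnitary hX).2
  set g : Matrix m m ℂ := star U * γ * U with hgdef
  have hgpsd : g.PosSemidef := by
    simpa [hgdef, Matrix.star_eq_conjTranspose] using hγ.conjTranspose_mul_mul_same U
  have h1g : (1 : Matrix m m ℂ) - g = star U * (1 - γ) * U := by
    rw [Matrix.mul_sub, Matrix.mul_one, Matrix.sub_mul, hUU']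
  have h1gpsd : ((1 : Matrix m m ℂ) - g).PosSemidef := by
    rw [h1g]
    simpa [Matrix.star_eq_conjTranspose] using hγ1.conjTranspose_mul_mul_same U
  set D : Matrix m m ℂ := Matrix.diagonal (RCLike.ofReal ∘ hX.eigenvalues) with hDdef
  have htr : (X * γ).trace = (D * g).trace := by
    conv_lhs => rw [hX.spectral_theorem]
    calc (U * D * star U * γ).trace
        = (U * (D * (star U * γ))).trace := by rw [Matrix.mul_assoc, Matrix.mul_assoc]
      _ = ((D * (star U * γ)) * U).trace := Matrix.trace_mul_comm _ _
      _ = (D * g).trace := by rw [Matrix.mul_assoc, hgdef, Matrix.mul_assoc]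
  have hDg : (D * g).trace = ∑ i, (hX.eigenvalues i : ℂ) * g i i := by
    simp [hDdef, Matrix.trace, Matrix.diag, Matrix.diagonal_mul]
  have hre : ((X * γ).trace).re = ∑ i, hX.eigenvalues i * (g i i).re := by
    rw [htr, hDg, Complex.re_sum]
    exact Finset.sum_congr rfl fun i _ => by simp [Complex.mul_re]
  rw [hre, negTrace, dif_pos hX]
  refine Finset.sum_le_sum fun i _ => ?_
  have h0 : 0 ≤ (g i i).re := psd_diag_re_nonneg hgpsd i
  have h1 : (g i i).re ≤ 1 := by
    have := psd_diag_re_nonneg h1gpsd i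
    simp only [Matrix.sub_apply, Matrix.one_apply_eq, Complex.sub_re, Complex.one_re] at this
    linarith
  rcases le_or_gt 0 (hX.eigenvalues i) with hlam | hlam
  · rw [min_eq_right hlam]
    exact mul_nonneg hlam h0
  · rw [min_eq_left hlam.le]
    have := mul_le_mul_of_nonpos_left h1 hlam.le
    simpa using this

lemma exists_min_dm {X : Matrix m m ℂ} (hX : X.IsHermitian) :
    ∃ γ : Matrix m m ℂ, γ.PosSemidef ∧ ((1 : Matrix m m ℂ) - γ).PosSemidef ∧
      ((X * γ).trace).re = negTrace X := by
  classical
  set U : Matrix m m ℂ := (Matrix.IsHermitian.eigenvectorUnitary hX : Matrix m m ℂ) with hUdef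
  have hUU : U * star U = 1 :=
    (Matrix.mem_unitaryGroup_iff).mp (Matrix.IsHermitian.eigenvectorUnitary hX).2
  have hUU' : star U * U = 1 :=
    (Matrix.mem_unitaryGroup_iff').mp (Matrix.IsHermitian.eigenvectorUnitary hX).2
  set e : m → ℂ := fun i => if hX.eigenvalues i < 0 then 1 else 0 with hedef
  set D : Matrix m m ℂ := Matrix.diagonal (RCLike.ofReal ∘ hX.eigenvalues) with hDdef
  set E : Matrix m m ℂ := Matrix.diagonal e with hEdef
  refine ⟨U * E * star U, ?_, ?_, ?_⟩
  · have hE : E.PosSemidef := Matrix.posSemidef_diagonal_iff.mpr fun i => by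
      by_cases h : hX.eigenvalues i < 0 <;> simp [hedef, h]
    simpa [Matrix.star_eq_conjTranspose] using hE.mul_mul_conjTranspose_same U
  · have h1 : (1 : Matrix m m ℂ) - U * E * star U = U * (1 - E) * star U := by
      rw [Matrix.mul_sub, Matrix.mul_one, Matrix.sub_mul, hUU]
    rw [h1]
    have hE : ((1 : Matrix m m ℂ) - E).PosSemidef := by
      have : (1 : Matrix m m ℂ) - E = Matrix.diagonal (fun i => 1 - e i) := by
        rw [hEdef, ← Matrix.diagonal_one, Matrix.diagonal_sub]
      rw [this]
      refine Matrix.posSemidef_diagonal_iff.mpr fun i => by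
        by_cases h : hX.eigenvalues i < 0 <;> simp [hedef, h]
    simpa [Matrix.star_eq_conjTranspose] using hE.mul_mul_conjTranspose_same U
  · have key : X * (U * E * star U) = U * (D * (E * star U)) := by
      conv_lhs => rw [hX.spectral_theorem, Unitary.conjStarAlgAut_apply]
      simp only [Matrix.mul_assoc]
      rw [← Matrix.mul_assoc (star U) U (E * star U), hUU', Matrix.one_mul]
    rw [key]
    have : (U * (D * (E * star U))).trace = (D * E).trace := by
      rw [Matrix.trace_mul_comm, Matrix.mul_assoc, Matrix.mul_assoc, hUU', Matrix.mul_one]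
    rw [this]
    have hDE : (D * E).trace = ∑ i, (hX.eigenvalues i : ℂ) * e i := by
      simp [hDdef, hEdef, Matrix.diagonal_mul_diagonal, Matrix.trace_diagonal]
    rw [hDE, negTrace, dif_pos hX, Complex.re_sum]
    refine Finset.sum_congr rfl fun i _ => ?_
    by_cases h : hX.eigenvalues i < 0
    · simp [hedef, h, min_eq_left h.le]
    · simp [hedef, h, min_eq_right (not_lt.mp h)]

end DecouplingHelpers


section TorusLemmas

lemma isNN_symm {d L : ℕ} {x y : Lam d L} (h : isNN x y) : isNN y x := by
  obtain ⟨ν, h1, h2⟩ := h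
  refine ⟨ν, ?_, fun μ hμ => (h2 μ hμ).symm⟩
  rcases h1 with h | h
  · exact Or.inr h.symm
  · exact Or.inl h.symm

lemma lap_isHermitian (d L : ℕ) : (lap d L).IsHermitian := by
  show (lap d L)ᴴ = lap d L
  ext x y
  have hs : isNN y x ↔ isNN x y := ⟨isNN_symm, isNN_symm⟩
  have he : (y = x) ↔ (x = y) := eq_comm
  simp [lap, Matrix.conjTranspose_apply, Matrix.sub_apply, Matrix.smul_apply,
    Matrix.one_apply, hs, he, apply_ite (star : ℂ → ℂ)]

lemma proj_conjTranspose {d L : ℕ} (A : Set (Lam d L)) : (proj A)ᴴ = proj A := by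
  ext x y
  by_cases h : x = y
  · subst h
    simp [proj, Matrix.conjTranspose_apply, Matrix.diagonal_apply_eq,
      apply_ite (star : ℂ → ℂ)]
  · simp [proj, Matrix.conjTranspose_apply, Matrix.diagonal_apply_ne _ h,
      Matrix.diagonal_apply_ne _ (Ne.symm h)]

lemma proj_mul_self {d L : ℕ} [NeZero L] (A : Set (Lam d L)) :
    proj A * proj A = proj A := by
  ext x y
  rcases eq_or_ne x y with rfl | h
  · by_cases hx : x ∈ A <;>
      simp [proj, Matrix.diagonal_mul_diagonal, Matrix.diagonal_apply_eq, hx]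
  · simp [proj, Matrix.diagonal_mul_diagonal, Matrix.diagonal_apply_ne _ h]

lemma proj_add_compl {d L : ℕ} (Ω : Set (Lam d L)) : proj Ω + proj Ωᶜ = 1 := by
  ext x y
  rcases eq_or_ne x y with rfl | h
  · by_cases hx : x ∈ Ω <;>
      simp [proj, Matrix.add_apply, Matrix.diagonal_apply_eq, Matrix.one_apply_eq, hx]
  · simp [proj, Matrix.add_apply, Matrix.diagonal_apply_ne _ h, Matrix.one_apply_ne h]

end TorusLemmas

/-- Eq. (3.55), nonnegativity of the decoupling cost: for every `μ`
and every `Ω ⊆ Λ`, `Tr{[-Δ̃-μ]_-} ≥ Tr{[-Δ-μ]_-}` with `Δ̃ = P_ΩΔP_Ω + P_Ω^⊥ΔP_Ω^⊥`. -/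
theorem decoupling_raises_negative_eigenvalue_sum (d L : ℕ) (hd : 1 ≤ d) [NeZero L]
    (hLeven : Even L) (hL2 : 2 ≤ L) (μ : ℝ) (Ω : Set (Lam d L)) :
    negTrace (-(lap d L) - (μ : ℂ) • 1) ≤
      negTrace (-(proj Ω * lap d L * proj Ω + proj Ωᶜ * lap d L * proj Ωᶜ)
        - (μ : ℂ) • 1) := by
  classical
  set P : Matrix (Lam d L) (Lam d L) ℂ := proj Ω with hPdef
  set Q : Matrix (Lam d L) (Lam d L) ℂ := proj Ωᶜ with hQdef
  set X : Matrix (Lam d L) (Lam d L) ℂ := -(lap d L) - (μ : ℂ) • 1 with hXdef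
  set Xt : Matrix (Lam d L) (Lam d L) ℂ :=
    -(P * lap d L * P + Q * lap d L * Q) - (μ : ℂ) • 1 with hXtdef
  have hP : Pᴴ = P := proj_conjTranspose Ω
  have hQ : Qᴴ = Q := proj_conjTranspose Ωᶜ
  have hPP : P * P = P := proj_mul_self Ω
  have hQQ : Q * Q = Q := proj_mul_self Ωᶜ
  have hPQ1 : P + Q = 1 := proj_add_compl Ω
  have hΔ : (lap d L).IsHermitian := lap_isHermitian d L
  have hsmul : (((μ : ℂ) • 1 : Matrix (Lam d L) (Lam d L) ℂ))ᴴ = (μ : ℂ) • 1 := by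
    rw [Matrix.conjTranspose_smul, Matrix.conjTranspose_one, Complex.star_def,
      Complex.conj_ofReal]
  have hX : X.IsHermitian := by
    show Xᴴ = X
    rw [hXdef, Matrix.conjTranspose_sub, Matrix.conjTranspose_neg, hΔ.eq, hsmul]
  have hXt : Xt.IsHermitian := by
    show Xtᴴ = Xt
    rw [hXtdef, Matrix.conjTranspose_sub, Matrix.conjTranspose_neg,
      Matrix.conjTranspose_add, Matrix.conjTranspose_mul, Matrix.conjTranspose_mul,
      Matrix.conjTranspose_mul, Matrix.conjTranspose_mul, hP, hQ, hΔ.eq, hsmul,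
      Matrix.mul_assoc, Matrix.mul_assoc]
  have hpinch : P * X * P + Q * X * Q = Xt := by
    rw [hXdef, hXtdef]
    simp only [Matrix.mul_sub, Matrix.sub_mul, Matrix.mul_neg, Matrix.neg_mul,
      Matrix.mul_smul, Matrix.smul_mul, Matrix.mul_one, Matrix.one_mul]
    rw [hPP, hQQ, ← hPQ1, smul_add]
    abel
  have pinchtr : ∀ γ : Matrix (Lam d L) (Lam d L) ℂ,
      (X * (P * γ * P + Q * γ * Q)).trace = (Xt * γ).trace := by
    intro γ
    rw [← hpinch, Matrix.mul_add, Matrix.trace_add, Matrix.add_mul, Matrix.trace_add]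
    congr 1
    · rw [← Matrix.mul_assoc, ← Matrix.mul_assoc, Matrix.trace_mul_cycle]
      simp only [Matrix.mul_assoc]
    · rw [← Matrix.mul_assoc, ← Matrix.mul_assoc, Matrix.trace_mul_cycle]
      simp only [Matrix.mul_assoc]
  obtain ⟨γ₀, hγ₀, hγ₀1, hγ₀tr⟩ := exists_min_dm hXt
  set γ' : Matrix (Lam d L) (Lam d L) ℂ := P * γ₀ * P + Q * γ₀ * Q with hγ'def
  have hγ'psd : γ'.PosSemidef := by
    have h1 : (P * γ₀ * P).PosSemidef := by
      have := hγ₀.mul_mul_conjTranspose_same P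
      rwa [hP] at this
    have h2 : (Q * γ₀ * Q).PosSemidef := by
      have := hγ₀.mul_mul_conjTranspose_same Q
      rwa [hQ] at this
    exact h1.add h2
  have hγ'1 : ((1 : Matrix (Lam d L) (Lam d L) ℂ) - γ').PosSemidef := by
    have heq : (1 : Matrix (Lam d L) (Lam d L) ℂ) - γ'
        = P * (1 - γ₀) * P + Q * (1 - γ₀) * Q := by
      rw [hγ'def]
      simp only [Matrix.mul_sub, Matrix.sub_mul, Matrix.mul_one]
      rw [hPP, hQQ, ← hPQ1]
      abel
    rw [heq]
    have h1 : (P * (1 - γ₀) * P).PosSemidef := by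
      have := hγ₀1.mul_mul_conjTranspose_same P
      rwa [hP] at this
    have h2 : (Q * (1 - γ₀) * Q).PosSemidef := by
      have := hγ₀1.mul_mul_conjTranspose_same Q
      rwa [hQ] at this
    exact h1.add h2
  calc negTrace X ≤ ((X * γ').trace).re := negTrace_le_re_trace_mul hX hγ'psd hγ'1
    _ = ((Xt * γ₀).trace).re := by rw [hγ'def, pinchtr γ₀]
    _ = negTrace Xt := hγ₀tr
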